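/- Let z ∈ [1,2], let P be a finite set of points in ℝ^d, let w : P → [0,∞) be a weight function, and let M be an invertible d×d real matrix such that ‖Mx‖₂^z ≤ ∑_{q∈P} w(q)·|qᵀx|^z for every x ∈ ℝ^d. Then for every p ∈ P, sup_{x : ∑_{q∈P} w(q)|qᵀx|^z > 0} w(p)·|pᵀx|^z / ∑_{q∈P} w(q)·|qᵀx|^z ≤ w(p)·‖(Mᵀ)⁻¹p‖_z^z. -/

import Mathlib

open Matrix

/-- The Euclidean (`ℓ₂`) norm of a vector in `ℝ^d`. -/
noncomputable def l2 {d : ℕ} (x : Fin d → ℝ) : ℝ := Real.sqrt (∑ i, x i ^ 2)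

lemma abs_le_l2' {d : ℕ} (y : Fin d → ℝ) (i : Fin d) : |y i| ≤ l2 y := by
  rw [l2, ← Real.sqrt_sq_eq_abs]
  exact Real.sqrt_le_sqrt (Finset.single_le_sum (f := fun j => y j ^ 2)
    (fun j _ => sq_nonneg _) (Finset.mem_univ i))

lemma lq_le_l2' {d : ℕ} (y : Fin d → ℝ) {q : ℝ} (hq : 2 ≤ q) :
    (∑ i, |y i| ^ q) ^ (1/q) ≤ l2 y := by
  have hq0 : 0 < q := by linarith
  have hsum0 : (0:ℝ) ≤ ∑ j, y j ^ 2 := Finset.sum_nonneg fun j _ => sq_nonneg _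
  have hs0 : 0 ≤ l2 y := Real.sqrt_nonneg _
  have hs2 : l2 y ^ 2 = ∑ j, y j ^ 2 := Real.sq_sqrt hsum0
  rcases eq_or_lt_of_le hs0 with h0 | h0
  · have hy : ∀ i, y i = 0 := by
      intro i
      have h2 : ∑ j, y j ^ 2 = 0 := by rw [← hs2, ← h0]; ring
      have := (Finset.sum_eq_zero_iff_of_nonneg (fun j _ => sq_nonneg (y j))).1 h2 i (Finset.mem_univ i)
      exact pow_eq_zero_iff (n := 2) (by norm_num) |>.1 this
    have hz : (∑ i, |y i| ^ q) = 0 := by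
      apply Finset.sum_eq_zero; intro i _
      rw [hy i, abs_zero, Real.zero_rpow hq0.ne']
    rw [hz, Real.zero_rpow (by positivity)]
    exact hs0
  · set s := l2 y
    have key : ∑ i, |y i| ^ q ≤ s ^ q := by
      have h1 : ∀ i, |y i| ^ q ≤ (|y i| / s) ^ (2:ℝ) * s ^ q := by
        intro i
        have hdiv0 : 0 ≤ |y i| / s := div_nonneg (abs_nonneg _) hs0
        have hdiv1 : |y i| / s ≤ 1 := (div_le_one h0).2 (abs_le_l2' y i)
        have : |y i| ^ q = (|y i| / s) ^ q * s ^ q := by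
          rw [← Real.mul_rpow hdiv0 hs0, div_mul_cancel₀ _ h0.ne']
        rw [this]
        apply mul_le_mul_of_nonneg_right _ (Real.rpow_nonneg hs0 _)
        rcases eq_or_lt_of_le hdiv0 with he | he
        · rw [← he, Real.zero_rpow hq0.ne', Real.zero_rpow (by norm_num)]
        · exact Real.rpow_le_rpow_of_exponent_ge he hdiv1 hq
      calc ∑ i, |y i| ^ q ≤ ∑ i, (|y i| / s) ^ (2:ℝ) * s ^ q :=
            Finset.sum_le_sum fun i _ => h1 i
        _ = s ^ q := by
            have : ∀ i : Fin d, (|y i| / s) ^ (2:ℝ) = y i ^ 2 / s ^ 2 := by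
              intro i
              rw [Real.rpow_two, div_pow, sq_abs]
            simp_rw [this]
            rw [← Finset.sum_mul, ← Finset.sum_div, ← hs2, div_self (by positivity), one_mul]
    calc (∑ i, |y i| ^ q) ^ (1/q) ≤ (s ^ q) ^ (1/q) :=
          Real.rpow_le_rpow (Finset.sum_nonneg fun i _ => Real.rpow_nonneg (abs_nonneg _) _) key (by positivity)
      _ = s := by
          rw [← Real.rpow_mul hs0, mul_one_div_cancel hq0.ne', Real.rpow_one]

/-- ℓ_z Hölder against ℓ₂, for 1 ≤ z ≤ 2. -/
lemma key_holder {d : ℕ} (a y : Fin d → ℝ) {z : ℝ} (hz1 : 1 ≤ z) (hz2 : z ≤ 2) :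
    |∑ i, a i * y i| ≤ (∑ i, |a i| ^ z) ^ (1/z) * l2 y := by
  have step1 : |∑ i, a i * y i| ≤ ∑ i, |a i| * |y i| := by
    calc |∑ i, a i * y i| ≤ ∑ i, |a i * y i| := Finset.abs_sum_le_sum_abs _ _
      _ = ∑ i, |a i| * |y i| := by simp [abs_mul]
  rcases eq_or_lt_of_le hz1 with h1 | h1
  · -- z = 1
    have hz : z = 1 := h1.symm
    subst hz
    have : (∑ i, |a i| ^ (1:ℝ)) ^ (1/(1:ℝ)) = ∑ i, |a i| := by
      simp [Real.rpow_one]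
    rw [this]
    refine step1.trans ?_
    rw [Finset.sum_mul]
    exact Finset.sum_le_sum fun i _ =>
      mul_le_mul_of_nonneg_left (abs_le_l2' y i) (abs_nonneg _)
  · -- z > 1, Hölder
    set q := Real.conjExponent z with hqdef
    have hconj : z.HolderConjugate q := Real.HolderConjugate.conjExponent h1
    have hq2 : 2 ≤ q := by
      rw [hqdef, Real.conjExponent, le_div_iff₀ (by linarith)]
      nlinarith
    have holder := Real.inner_le_Lp_mul_Lq Finset.univ (fun i => |a i|) (fun i => |y i|) hconj
    simp only [abs_abs] at holder
    calc |∑ i, a i * y i| ≤ ∑ i, |a i| * |y i| := step1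
      _ ≤ (∑ i, |a i| ^ z) ^ (1/z) * (∑ i, |y i| ^ q) ^ (1/q) := holder
      _ ≤ (∑ i, |a i| ^ z) ^ (1/z) * l2 y := by
          apply mul_le_mul_of_nonneg_left (lq_le_l2' y hq2)
          exact Real.rpow_nonneg (Finset.sum_nonneg fun i _ => Real.rpow_nonneg (abs_nonneg _) _) _

/-- Sensitivity bound for `ℓ_z`-regression, `z ∈ [1,2]`: if `M` is an invertible matrix
with `‖Mx‖₂^z ≤ ∑_{q∈P} w(q)|qᵀx|^z` for every `x`, then the weighted sensitivity of each
`p ∈ P` is at most `w(p)·‖(Mᵀ)⁻¹p‖_z^z`. -/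
theorem lz_sensitivity_mid_z {d : ℕ} (z : ℝ) (hz : z ∈ Set.Icc (1 : ℝ) 2)
    (P : Finset (Fin d → ℝ)) (w : (Fin d → ℝ) → ℝ) (hw : ∀ p ∈ P, 0 ≤ w p)
    (M : Matrix (Fin d) (Fin d) ℝ) (hM : IsUnit M)
    (hMlow : ∀ x : Fin d → ℝ, l2 (M.mulVec x) ^ z ≤ ∑ q ∈ P, w q * |∑ i, q i * x i| ^ z) :
    ∀ p ∈ P,
      (⨆ x : {x : Fin d → ℝ // 0 < ∑ q ∈ P, w q * |∑ i, q i * x i| ^ z},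
        w p * |∑ i, p i * (x : Fin d → ℝ) i| ^ z /
          ∑ q ∈ P, w q * |∑ i, q i * (x : Fin d → ℝ) i| ^ z) ≤
      w p * ∑ i, |(Mᵀ)⁻¹.mulVec p i| ^ z := by
  obtain ⟨hz1, hz2⟩ := hz
  have hz0 : 0 < z := by linarith
  intro p hp
  set a : Fin d → ℝ := (Mᵀ)⁻¹.mulVec p with ha
  set A : ℝ := ∑ i, |a i| ^ z with hA
  have hA0 : 0 ≤ A := Finset.sum_nonneg fun i _ => Real.rpow_nonneg (abs_nonneg _) _
  have hwp := hw p hp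
  apply Real.iSup_le _ (mul_nonneg hwp hA0)
  rintro ⟨x, hx⟩
  set y : Fin d → ℝ := M.mulVec x with hy
  set D : ℝ := ∑ q ∈ P, w q * |∑ i, q i * x i| ^ z with hD
  -- identity: pᵀx = aᵀy
  have hMt : IsUnit (Mᵀ).det := by
    rw [Matrix.det_transpose]
    exact (Matrix.isUnit_iff_isUnit_det M).1 hM
  have hid : ∑ i, p i * x i = ∑ i, a i * y i := by
    have h1 : a ⬝ᵥ y = (Mᵀ.mulVec a) ⬝ᵥ x := by
      rw [hy, Matrix.dotProduct_mulVec, Matrix.mulVec_transpose]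
    have h2 : Mᵀ.mulVec a = p := by
      rw [ha, Matrix.mulVec_mulVec, Matrix.mul_nonsing_inv _ hMt, Matrix.one_mulVec]
    have : a ⬝ᵥ y = p ⬝ᵥ x := by rw [h1, h2]
    simpa [dotProduct, mul_comm] using this.symm
  -- key bound
  have hkey : |∑ i, p i * x i| ^ z ≤ A * D := by
    have h1 : |∑ i, p i * x i| ≤ A ^ (1/z) * l2 y := by
      rw [hid]; exact key_holder a y hz1 hz2
    have h2 : |∑ i, p i * x i| ^ z ≤ (A ^ (1/z) * l2 y) ^ z :=
      Real.rpow_le_rpow (abs_nonneg _) h1 hz0.le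
    have h3 : (A ^ (1/z) * l2 y) ^ z = A * (l2 y) ^ z := by
      have hl2 : (0:ℝ) ≤ l2 y := Real.sqrt_nonneg _
      rw [Real.mul_rpow (Real.rpow_nonneg hA0 _) hl2,
        ← Real.rpow_mul hA0, one_div_mul_cancel hz0.ne', Real.rpow_one]
    have h4 : (l2 y) ^ z ≤ D := hMlow x
    calc |∑ i, p i * x i| ^ z ≤ A * (l2 y) ^ z := by rw [← h3]; exact h2
      _ ≤ A * D := mul_le_mul_of_nonneg_left h4 hA0
  rw [div_le_iff₀ hx]
  calc w p * |∑ i, p i * x i| ^ z ≤ w p * (A * D) := mul_le_mul_of_nonneg_left hkey hwp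
    _ = w p * A * D := by ring
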